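/- Let G be a chordal graph and v a vertex of G which lies in exactly t maximal cliques of G. Then c(G_v) ≤ c(G) − t + 1. In particular, if t ≥ 2, then c(G_v) < c(G). -/

import Mathlib

/-- `G` has an induced cycle of length `n`, i.e. an injective map from `ZMod n` to the
vertices such that images are adjacent exactly when the indices are consecutive. -/
def SimpleGraph.HasInducedCycle {V : Type*} (G : SimpleGraph V) (n : ℕ) : Prop :=
  ∃ f : ZMod n → V, Function.Injective f ∧
    ∀ i j : ZMod n, G.Adj (f i) (f j) ↔ (j = i + 1 ∨ i = j + 1)

/-- A graph is chordal if it has no induced cycle of length greater than 3. -/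
def SimpleGraph.Chordal {V : Type*} (G : SimpleGraph V) : Prop :=
  ∀ n : ℕ, 4 ≤ n → ¬ G.HasInducedCycle n

/-- `c(G)`: the number of maximal cliques of a graph `G`. -/
noncomputable def numMaximalCliques {V : Type*} (G : SimpleGraph V) : ℕ :=
  {s : Set V | Maximal (fun t => G.IsClique t) s}.ncard

/-- The graph `G_v` on the vertex set of `G`, whose edges are those of `G` together with all
pairs of distinct neighbours of `v`. -/
def SimpleGraph.gv {V : Type*} (G : SimpleGraph V) (v : V) : SimpleGraph V where
  Adj u w := u ≠ w ∧ (G.Adj u w ∨ (G.Adj v u ∧ G.Adj v w))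
  symm := by
    constructor
    rintro u w ⟨h1, h2⟩
    exact ⟨h1.symm, h2.imp (fun h => h.symm) (fun h => ⟨h.2, h.1⟩)⟩
  loopless := ⟨fun u h => h.1 rfl⟩

lemma gv_adj {V : Type*} (G : SimpleGraph V) (v : V) (u w : V) :
    (G.gv v).Adj u w ↔ u ≠ w ∧ (G.Adj u w ∨ (G.Adj v u ∧ G.Adj v w)) := Iff.rfl

lemma gv_clique_of_clique {V : Type*} (G : SimpleGraph V) (v : V) {s : Set V}
    (h : G.IsClique s) : (G.gv v).IsClique s := fun _ ha _ hb hab =>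
  ⟨hab, Or.inl (h ha hb hab)⟩

lemma maximal_gv_mem {V : Type*} (G : SimpleGraph V) (v : V) {s : Set V}
    (hs : Maximal (fun c => (G.gv v).IsClique c) s) (hv : v ∈ s) :
    s = insert v (G.neighborSet v) := by
  have hcl : (G.gv v).IsClique (insert v (G.neighborSet v)) := by
    intro a ha b hb hab
    simp only [Set.mem_insert_iff, SimpleGraph.mem_neighborSet] at ha hb
    rcases ha with rfl | ha
    · rcases hb with rfl | hb
      · exact absurd rfl hab
      · exact ⟨hab, Or.inl hb⟩
    · rcases hb with rfl | hb
      · exact ⟨hab, Or.inl ha.symm⟩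
      · exact ⟨hab, Or.inr ⟨ha, hb⟩⟩
  have hsub : s ⊆ insert v (G.neighborSet v) := by
    intro u hu
    by_cases huv : u = v
    · exact huv ▸ Set.mem_insert _ _
    · rcases (hs.1 hv hu (Ne.symm huv)).2 with h | h
      · exact Set.mem_insert_of_mem _ h
      · exact absurd h.1 (G.loopless.irrefl v)
  exact le_antisymm hsub (hs.2 hcl hsub)

lemma maximal_gv_not_mem {V : Type*} {G : SimpleGraph V} (hG : G.Chordal) {v : V} {s : Set V}
    (hs : Maximal (fun c => (G.gv v).IsClique c) s) (hv : v ∉ s) :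
    Maximal (fun c => G.IsClique c) s := by
  obtain ⟨x, hxs, hvx⟩ : ∃ x ∈ s, ¬ G.Adj v x := by
    by_contra h
    push_neg at h
    have hcl : (G.gv v).IsClique (insert v s) := by
      intro a ha b hb hab
      simp only [Set.mem_insert_iff] at ha hb
      rcases ha with rfl | ha
      · rcases hb with rfl | hb
        · exact absurd rfl hab
        · exact ⟨hab, Or.inl (h b hb)⟩
      · rcases hb with rfl | hb
        · exact ⟨hab, Or.inl (h a ha).symm⟩
        · exact hs.1 ha hb hab
    exact hv (hs.2 hcl (Set.subset_insert _ _) (Set.mem_insert _ _))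
  have hclique : G.IsClique s := by
    intro u hu w hw huw
    rcases (hs.1 hu hw huw).2 with h | ⟨hvu, hvw⟩
    · exact h
    by_contra huwn
    have hxu : x ≠ u := fun h => hvx (h ▸ hvu)
    have hxw : x ≠ w := fun h => hvx (h ▸ hvw)
    have hux : G.Adj u x := by
      rcases (hs.1 hu hxs hxu.symm).2 with h | ⟨_, h⟩
      · exact h
      · exact absurd h hvx
    have hwx : G.Adj w x := by
      rcases (hs.1 hw hxs hxw.symm).2 with h | ⟨_, h⟩
      · exact h
      · exact absurd h hvx
    apply hG 4 le_rfl
    have hz : ∀ k : ZMod 4, k = 0 ∨ k = 1 ∨ k = 2 ∨ k = 3 := by decide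
    have e0 : ![v, u, x, w] (0 : ZMod 4) = v := rfl
    have e1 : ![v, u, x, w] (1 : ZMod 4) = u := rfl
    have e2 : ![v, u, x, w] (2 : ZMod 4) = x := rfl
    have e3 : ![v, u, x, w] (3 : ZMod 4) = w := rfl
    refine ⟨![v, u, x, w], ?_, ?_⟩
    · have h1 : v ≠ u := hvu.ne
      have h2 : v ≠ w := hvw.ne
      have h3 : v ≠ x := fun h => hv (h ▸ hxs)
      intro i j hij
      rcases hz i with rfl | rfl | rfl | rfl <;> rcases hz j with rfl | rfl | rfl | rfl <;>
        simp only [e0, e1, e2, e3] at hij <;> simp_all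
    · have hvv : ¬ G.Adj v v := G.loopless.irrefl v
      have huu : ¬ G.Adj u u := G.loopless.irrefl u
      have hxx : ¬ G.Adj x x := G.loopless.irrefl x
      have hww : ¬ G.Adj w w := G.loopless.irrefl w
      have h1 := hvu.symm
      have h2 := hvw.symm
      have h3 := hux.symm
      have h4 := hwx.symm
      have h5 : ¬ G.Adj x v := fun h => hvx h.symm
      have h6 : ¬ G.Adj w u := fun h => huwn h.symm
      intro i j
      rcases hz i with rfl | rfl | rfl | rfl <;> rcases hz j with rfl | rfl | rfl | rfl <;>
        simp only [e0, e1, e2, e3] <;> simp_all <;> decide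
  refine ⟨hclique, fun c hc hsc => ?_⟩
  exact hs.2 (gv_clique_of_clique G v hc) hsc

/-- Let `G` be a chordal graph and `v` a vertex of `G` which lies in exactly `t` maximal
cliques of `G`.  Then `c(G_v) ≤ c(G) - t + 1`; in particular, if `t ≥ 2`, then
`c(G_v) < c(G)`. -/
theorem numMaximalCliques_gv_le {V : Type*} [Fintype V] (G : SimpleGraph V) (hG : G.Chordal)
    (v : V) (t : ℕ)
    (ht : {s : Set V | Maximal (fun c => G.IsClique c) s ∧ v ∈ s}.ncard = t) :
    numMaximalCliques (G.gv v) ≤ numMaximalCliques G - t + 1 ∧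
      (2 ≤ t → numMaximalCliques (G.gv v) < numMaximalCliques G) := by
  classical
  set A := {s : Set V | Maximal (fun c => G.IsClique c) s ∧ v ∈ s} with hA
  set B := {s : Set V | Maximal (fun c => G.IsClique c) s ∧ v ∉ s} with hB
  have hdisj : Disjoint A B := by
    rw [Set.disjoint_left]
    rintro s ⟨_, h1⟩ ⟨_, h2⟩
    exact h2 h1
  have hunion : {s : Set V | Maximal (fun c => G.IsClique c) s} = A ∪ B := by
    ext s
    simp only [Set.mem_setOf_eq, Set.mem_union, hA, hB]
    tauto
  have hcard : numMaximalCliques G = t + B.ncard := by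
    rw [numMaximalCliques, hunion,
      Set.ncard_union_eq hdisj (Set.toFinite _) (Set.toFinite _), ht]
  have hsub : {s : Set V | Maximal (fun c => (G.gv v).IsClique c) s} ⊆
      insert (insert v (G.neighborSet v)) B := by
    intro s hs
    by_cases hv' : v ∈ s
    · rw [Set.mem_setOf_eq] at hs
      rw [maximal_gv_mem G v hs hv']
      exact Set.mem_insert _ _
    · exact Set.mem_insert_of_mem _ ⟨maximal_gv_not_mem hG hs hv', hv'⟩
  have h1 : numMaximalCliques (G.gv v) ≤ B.ncard + 1 :=
    le_trans (Set.ncard_le_ncard hsub (Set.toFinite _)) (Set.ncard_insert_le _ _)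
  exact ⟨by omega, fun h2t => by omega⟩
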